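/- Let f : Σ_𝐀 → ℝ be Hölder continuous and let ν_f be the eigenmeasure of the dual transfer operator: ∫ L_f φ dν_f = λ_f ∫ φ dν_f for all Hölder φ. Then ν_f is non-singular with respect to σ, and for each n ∈ ℕ the n-th Jacobian of ν_f equals λ_f^{−n} exp(S_n f), i.e., dν_f/dν_f^{(n)} = λ_f^{−n} e^{S_n f} where ν_f^{(n)}(B) = ∑_{|w|=n} ν_f(σ^n(B ∩ [w])). -/

import Mathlib

open MeasureTheory Filter Topology
open scoped BigOperators ENNReal

/-- The one-sided topological Markov shift over the alphabet `Fin N` with (0-1 real)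
transition matrix `A`. -/
def Shift (N : ℕ) (A : Matrix (Fin N) (Fin N) ℝ) : Type :=
  {ω : ℕ → Fin N // ∀ n, A (ω n) (ω (n + 1)) = 1}

/-- Product (= metric `d(ω,ω') = ∑ |ω_n − ω'_n| / 2^n`) uniformity on the shift space. -/
noncomputable instance (N : ℕ) (A : Matrix (Fin N) (Fin N) ℝ) : UniformSpace (Shift N A) :=
  letI : UniformSpace (Fin N) := ⊥
  inferInstanceAs (UniformSpace {ω : ℕ → Fin N // ∀ n, A (ω n) (ω (n + 1)) = 1})

noncomputable instance (N : ℕ) (A : Matrix (Fin N) (Fin N) ℝ) : MeasurableSpace (Shift N A) := borel _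
instance (N : ℕ) (A : Matrix (Fin N) (Fin N) ℝ) : BorelSpace (Shift N A) := ⟨rfl⟩

/-- The shift map `σ`. -/
def shiftMap {N : ℕ} {A : Matrix (Fin N) (Fin N) ℝ} : Shift N A → Shift N A :=
  fun ω => ⟨fun n => ω.1 (n + 1), fun n => ω.2 (n + 1)⟩

/-- The cylinder `[ω|n]` of points agreeing with `ω` in the first `n` coordinates. -/
def cyl {N : ℕ} {A : Matrix (Fin N) (Fin N) ℝ} (ω : Shift N A) (n : ℕ) : Set (Shift N A) :=
  {ω' | ∀ k < n, ω'.1 k = ω.1 k}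

/-- The cylinder `[w]` of a word `w` of length `n`. -/
def cylW {N : ℕ} {A : Matrix (Fin N) (Fin N) ℝ} {n : ℕ} (w : Fin n → Fin N) :
    Set (Shift N A) :=
  {ω | ∀ k : Fin n, ω.1 k.1 = w k}

/-- Birkhoff sum `S_n f = ∑_{k<n} f ∘ σ^k`. -/
noncomputable def birkhoff {N : ℕ} {A : Matrix (Fin N) (Fin N) ℝ} (f : Shift N A → ℝ)
    (n : ℕ) (ω : Shift N A) : ℝ :=
  ∑ k ∈ Finset.range n, f (shiftMap^[k] ω)

/-- The matrix `A` is a 0-1 matrix. -/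
def ZeroOne {N : ℕ} (A : Matrix (Fin N) (Fin N) ℝ) : Prop := ∀ i j, A i j = 0 ∨ A i j = 1

/-- The matrix `A` is aperiodic: some power has all entries positive. -/
def Aperiodic {N : ℕ} (A : Matrix (Fin N) (Fin N) ℝ) : Prop := ∃ k : ℕ, ∀ i j, 0 < (A ^ k) i j

/-- The metric `d(ω,ω') = ∑ |ω_n − ω'_n| / 2^n` on the shift space. -/
noncomputable def dshift {N : ℕ} {A : Matrix (Fin N) (Fin N) ℝ} (ω ω' : Shift N A) : ℝ :=
  ∑' n : ℕ, |((ω.1 n : ℕ) : ℝ) - ((ω'.1 n : ℕ) : ℝ)| / 2 ^ n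

/-- `f` is Hölder continuous (w.r.t. the metric `dshift`). -/
def HolderCont {N : ℕ} {A : Matrix (Fin N) (Fin N) ℝ} (f : Shift N A → ℝ) : Prop :=
  ∃ α > (0 : ℝ), ∃ C : ℝ, ∀ ω ω', |f ω - f ω'| ≤ C * dshift ω ω' ^ α

/-- The transfer operator `(L_f φ)(ω) = ∑_{σω' = ω} e^{f ω'} φ ω'`. -/
noncomputable def transferOp {N : ℕ} {A : Matrix (Fin N) (Fin N) ℝ} (f φ : Shift N A → ℝ)
    (ω : Shift N A) : ℝ :=
  ∑' ω' : {ω' : Shift N A // shiftMap ω' = ω}, Real.exp (f ω'.1) * φ ω'.1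

/-- `μ` is shift invariant. -/
def Invariant {N : ℕ} {A : Matrix (Fin N) (Fin N) ℝ} (μ : Measure (Shift N A)) : Prop :=
  ∀ B : Set (Shift N A), MeasurableSet B → μ (shiftMap ⁻¹' B) = μ B

/-- `μ` is a Gibbs measure for `f` with pressure constant `P`:
`C⁻¹ ≤ μ [ω|n] / exp(−nP + S_n f ω) ≤ C` for all `ω`, `n`. -/
def IsGibbs {N : ℕ} {A : Matrix (Fin N) (Fin N) ℝ} (μ : Measure (Shift N A))
    (f : Shift N A → ℝ) (P : ℝ) : Prop :=
  ∃ C > (0 : ℝ), ∀ (ω : Shift N A) (n : ℕ),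
    C⁻¹ * Real.exp (-(n : ℝ) * P + birkhoff f n ω) ≤ (μ (cyl ω n)).toReal ∧
    (μ (cyl ω n)).toReal ≤ C * Real.exp (-(n : ℝ) * P + birkhoff f n ω)

/-- Entropy of the partition of `Σ_A` into cylinders of length `n`. -/
noncomputable def cylEntropy {N : ℕ} {A : Matrix (Fin N) (Fin N) ℝ}
    (μ : Measure (Shift N A)) (n : ℕ) : ℝ :=
  -∑ w : Fin n → Fin N, (μ (cylW w)).toReal * Real.log (μ (cylW w)).toReal

/-- Kolmogorov–Sinai entropy of an invariant measure on the shift, computed (via the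
generating cylinder partition and subadditivity) as `inf_n H_n / n = lim_n H_n / n`. -/
noncomputable def ksEntropy {N : ℕ} {A : Matrix (Fin N) (Fin N) ℝ}
    (μ : Measure (Shift N A)) : ℝ :=
  ⨅ n : ℕ, cylEntropy μ (n + 1) / (n + 1)

/-- Topological pressure `P(σ, f) = sup_μ (h_μ(σ) + ∫ f dμ)` over invariant Borel
probability measures. -/
noncomputable def pressure {N : ℕ} {A : Matrix (Fin N) (Fin N) ℝ} (f : Shift N A → ℝ) : ℝ :=
  sSup {x : ℝ | ∃ μ : Measure (Shift N A), IsProbabilityMeasure μ ∧ Invariant μ ∧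
    x = ksEntropy μ + ∫ ω, f ω ∂μ}

/-- The entropy spectrum `E^{(μ)}(α)`: the topological entropy of the level set
`{ω : lim_n −(1/n) log μ [ω|n] = α}`. -/
noncomputable def entSpec {N : ℕ} {A : Matrix (Fin N) (Fin N) ℝ}
    (μ : Measure (Shift N A)) (α : ℝ) : EReal :=
  Dynamics.coverEntropy shiftMap
    {ω : Shift N A |
      Tendsto (fun n : ℕ => -(n : ℝ)⁻¹ * Real.log (μ (cyl ω n)).toReal) atTop (𝓝 α)}


section AuxShift

variable {N : ℕ} {A : Matrix (Fin N) (Fin N) ℝ}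

instance : CompactSpace (Shift N A) := by
  letI : UniformSpace (Fin N) := ⊥
  haveI : DiscreteTopology (Fin N) := ⟨UniformSpace.toTopologicalSpace_bot⟩
  have hcl : IsClosed {ω : ℕ → Fin N | ∀ n, A (ω n) (ω (n + 1)) = 1} := by
    have : {ω : ℕ → Fin N | ∀ n, A (ω n) (ω (n + 1)) = 1} =
        ⋂ n, (fun ω : ℕ → Fin N => (ω n, ω (n+1))) ⁻¹' {p : Fin N × Fin N | A p.1 p.2 = 1} := by
      ext ω; simp [Set.mem_iInter]
    rw [this]
    exact isClosed_iInter fun n =>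
      (isClosed_discrete _).preimage (((continuous_apply n).prodMk (continuous_apply (n+1))))
  exact isCompact_iff_compactSpace.mp hcl.isCompact

instance : SecondCountableTopology (Shift N A) := by
  letI : UniformSpace (Fin N) := ⊥
  haveI : DiscreteTopology (Fin N) := ⟨UniformSpace.toTopologicalSpace_bot⟩
  haveI : SecondCountableTopology (ℕ → Fin N) := inferInstance
  exact TopologicalSpace.secondCountableTopology_induced (Shift N A) (ℕ → Fin N) Subtype.val

lemma discFin : letI : UniformSpace (Fin N) := ⊥; DiscreteTopology (Fin N) :=
  letI : UniformSpace (Fin N) := ⊥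
  ⟨UniformSpace.toTopologicalSpace_bot⟩

lemma continuous_val : Continuous (fun ω : Shift N A => (ω.1 : ℕ → Fin N)) := by
  letI : UniformSpace (Fin N) := ⊥
  exact continuous_subtype_val

lemma isOpen_coord (k : ℕ) (c : Fin N) : IsOpen {ω : Shift N A | ω.1 k = c} := by
  letI : UniformSpace (Fin N) := ⊥
  haveI := (discFin (N := N))
  exact ((isOpen_discrete {c}).preimage ((continuous_apply k).comp continuous_val))

lemma isClosed_coord (k : ℕ) (c : Fin N) : IsClosed {ω : Shift N A | ω.1 k = c} := by
  letI : UniformSpace (Fin N) := ⊥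
  haveI := (discFin (N := N))
  exact ((isClosed_discrete {c}).preimage ((continuous_apply k).comp continuous_val))

lemma isOpen_cylW {m : ℕ} (u : Fin m → Fin N) : IsOpen (cylW u : Set (Shift N A)) := by
  have : (cylW u : Set (Shift N A)) = ⋂ k : Fin m, {ω : Shift N A | ω.1 k.1 = u k} := by
    ext ω; simp [cylW, Set.mem_iInter]
  rw [this]; exact isOpen_iInter_of_finite fun k => isOpen_coord _ _

lemma isClosed_cylW {m : ℕ} (u : Fin m → Fin N) : IsClosed (cylW u : Set (Shift N A)) := by
  have : (cylW u : Set (Shift N A)) = ⋂ k : Fin m, {ω : Shift N A | ω.1 k.1 = u k} := by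
    ext ω; simp [cylW, Set.mem_iInter]
  rw [this]; exact isClosed_iInter fun k => isClosed_coord _ _

lemma measurable_cylW {m : ℕ} (u : Fin m → Fin N) : MeasurableSet (cylW u : Set (Shift N A)) :=
  (isOpen_cylW u).measurableSet

def cylSets (N : ℕ) (A : Matrix (Fin N) (Fin N) ℝ) : Set (Set (Shift N A)) :=
  {s | ∃ (m : ℕ) (u : Fin m → Fin N), s = cylW u}

lemma word_mem (ω : Shift N A) (m : ℕ) : ω ∈ (cylW (fun k : Fin m => ω.1 k.1) : Set (Shift N A)) :=
  fun _ => rfl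

lemma basis_cylSets : TopologicalSpace.IsTopologicalBasis (cylSets N A) := by
  letI : UniformSpace (Fin N) := ⊥
  apply TopologicalSpace.isTopologicalBasis_of_isOpen_of_nhds
  · rintro s ⟨m, u, rfl⟩; exact isOpen_cylW u
  · intro ω s hωs hs
    have hind : IsInducing (Subtype.val : Shift N A → (ℕ → Fin N)) := IsInducing.subtypeVal
    rcases hind.isOpen_iff.mp hs with ⟨V, hV, rfl⟩
    rcases isOpen_pi_iff.mp hV ω.1 hωs with ⟨I, U, hIU, hsub⟩
    classical
    set m := (if h : I.Nonempty then I.max' h + 1 else 0) with hm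
    refine ⟨cylW (fun k : Fin m => ω.1 k.1), ⟨m, _, rfl⟩, word_mem ω m, ?_⟩
    intro ω' hω'
    apply hsub
    intro i hi
    have him : i < m := by
      have hne : I.Nonempty := ⟨i, hi⟩
      rw [hm]; simp only [dif_pos hne]
      exact Nat.lt_succ_of_le (I.le_max' i hi)
    have := hω' ⟨i, him⟩
    simp only at this
    rw [this]
    exact (hIU i hi).2

lemma countable_cylSets : (cylSets N A).Countable := by
  have : cylSets N A = ⋃ m : ℕ, Set.range (fun u : Fin m → Fin N => (cylW u : Set (Shift N A))) := by
    ext s; simp [cylSets, Set.mem_iUnion, eq_comm]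
  rw [this]
  exact Set.countable_iUnion fun m => Set.countable_range _

lemma measSpace_eq : (inferInstance : MeasurableSpace (Shift N A)) =
    MeasurableSpace.generateFrom (cylSets N A) := by
  borelize (Shift N A)
  haveI : SecondCountableTopology (Shift N A) := by
    letI : UniformSpace (Fin N) := ⊥
    haveI := (discFin (N := N))
    haveI : SecondCountableTopology (ℕ → Fin N) := inferInstance
    exact TopologicalSpace.secondCountableTopology_induced (Shift N A) (ℕ → Fin N) Subtype.val
  exact basis_cylSets.borel_eq_generateFrom

lemma shift_iter_apply (k : ℕ) (ω : Shift N A) (j : ℕ) :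
    (shiftMap^[k] ω).1 j = ω.1 (j + k) := by
  induction k generalizing ω j with
  | zero => rfl
  | succ k ih =>
    rw [Function.iterate_succ_apply, ih]
    exact congrArg ω.1 (by omega : (j+k)+1 = j+(k+1))

lemma birkhoff_succ (f : Shift N A → ℝ) (m : ℕ) (x : Shift N A) :
    birkhoff f (m+1) x = f x + birkhoff f m (shiftMap x) := by
  unfold birkhoff
  rw [Finset.sum_range_succ']
  simp only [Function.iterate_succ_apply, Function.iterate_zero_apply]
  ring

lemma birkhoff_zero (f : Shift N A → ℝ) (x : Shift N A) : birkhoff f 0 x = 0 := by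
  simp [birkhoff]

def consF (a : Fin N) (x : ℕ → Fin N) : ℕ → Fin N :=
  fun k => match k with | 0 => a | (k+1) => x k

lemma cons_admiss (a : Fin N) (ω : Shift N A) (h : A a (ω.1 0) = 1) :
    ∀ n, A (consF a ω.1 n) (consF a ω.1 (n + 1)) = 1 := by
  intro n
  cases n with
  | zero => exact h
  | succ n => exact ω.2 n

open scoped Classical in
noncomputable def consS (a : Fin N) (ω : Shift N A) : Shift N A :=
  if h : A a (ω.1 0) = 1 then ⟨consF a ω.1, cons_admiss a ω h⟩ else ω

lemma consS_val (a : Fin N) (ω : Shift N A) (h : A a (ω.1 0) = 1) :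
    (consS a ω).1 = consF a ω.1 := by
  unfold consS; exact congrArg Subtype.val (dif_pos h)

lemma consS_zero (a : Fin N) (ω : Shift N A) (h : A a (ω.1 0) = 1) :
    (consS a ω).1 0 = a := by rw [consS_val a ω h]; rfl

lemma shift_consS (a : Fin N) (ω : Shift N A) (h : A a (ω.1 0) = 1) :
    shiftMap (consS a ω) = ω := by
  apply Subtype.ext; funext k
  show (consS a ω).1 (k+1) = ω.1 k
  rw [consS_val a ω h]; rfl

open scoped Classical in
lemma transfer_sum (f φ : Shift N A → ℝ) (ω : Shift N A) :
    transferOp f φ ω =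
      ∑ a : Fin N, if A a (ω.1 0) = 1
        then Real.exp (f (consS a ω)) * φ (consS a ω) else 0 := by
  classical
  set P : Fin N → Prop := fun a => A a (ω.1 0) = 1 with hP
  let e : {a : Fin N // P a} ≃ {ω' : Shift N A // shiftMap ω' = ω} :=
    { toFun := fun a => ⟨consS a.1 ω, shift_consS a.1 ω a.2⟩
      invFun := fun ω' => ⟨ω'.1.1 0, by
        have h2 := ω'.1.2 0
        have : ω'.1.1 1 = ω.1 0 := by
          have := congrArg (fun z => z.1 0) ω'.2
          exact this
        rw [this] at h2
        exact h2⟩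
      left_inv := fun a => Subtype.ext (consS_zero a.1 ω a.2)
      right_inv := fun ω' => by
        apply Subtype.ext; apply Subtype.ext; funext k
        have hz : ω'.1.1 1 = ω.1 0 := congrArg (fun z => z.1 0) ω'.2
        have hP' : A (ω'.1.1 0) (ω.1 0) = 1 := by rw [← hz]; exact ω'.1.2 0
        show (consS (ω'.1.1 0) ω).1 k = ω'.1.1 k
        rw [consS_val _ _ hP']
        cases k with
        | zero => rfl
        | succ k =>
          show ω.1 k = ω'.1.1 (k+1)
          exact (congrArg (fun z => z.1 k) ω'.2).symm }
  have h1 : transferOp f φ ω = ∑' a : {a : Fin N // P a},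
      Real.exp (f (consS a.1 ω)) * φ (consS a.1 ω) := by
    unfold transferOp
    rw [← e.tsum_eq]
    exact tsum_congr fun a => rfl
  rw [h1, tsum_fintype]
  rw [← Finset.sum_subtype (Finset.univ.filter P) (by simp) (fun a =>
      Real.exp (f (consS a ω)) * φ (consS a ω))]
  rw [Finset.sum_filter]

namespace ShiftAux

noncomputable def F (ω ω' : Shift N A) (n : ℕ) : ℝ :=
  |((ω.1 n : ℕ) : ℝ) - ((ω'.1 n : ℕ) : ℝ)| / 2 ^ n

lemma F_nonneg (ω ω' : Shift N A) (n : ℕ) : 0 ≤ F ω ω' n :=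
  div_nonneg (abs_nonneg _) (by positivity)

lemma F_le (ω ω' : Shift N A) (n : ℕ) : F ω ω' n ≤ (N : ℝ) * (1/2) ^ n := by
  have h1 : |((ω.1 n : ℕ) : ℝ) - ((ω'.1 n : ℕ) : ℝ)| ≤ (N : ℝ) := by
    have ha : ((ω.1 n : ℕ) : ℝ) < N := by exact_mod_cast (ω.1 n).2
    have hb : ((ω'.1 n : ℕ) : ℝ) < N := by exact_mod_cast (ω'.1 n).2
    have ha0 : (0:ℝ) ≤ ((ω.1 n : ℕ) : ℝ) := Nat.cast_nonneg _
    have hb0 : (0:ℝ) ≤ ((ω'.1 n : ℕ) : ℝ) := Nat.cast_nonneg _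
    rw [abs_sub_le_iff]; constructor <;> linarith
  have h2 : (1/2:ℝ)^n = 1 / 2^n := by rw [one_div_pow]
  rw [F, div_eq_mul_one_div, h2]
  exact mul_le_mul_of_nonneg_right h1 (by positivity)

lemma F_summable (ω ω' : Shift N A) : Summable (F ω ω') :=
  Summable.of_nonneg_of_le (F_nonneg ω ω') (F_le ω ω')
    ((summable_geometric_of_lt_one (by norm_num) (by norm_num)).mul_left _)

lemma dshift_eq (ω ω' : Shift N A) : dshift ω ω' = ∑' n, F ω ω' n := rfl

lemma dshift_nonneg (ω ω' : Shift N A) : 0 ≤ dshift ω ω' :=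
  tsum_nonneg (F_nonneg ω ω')

lemma dshift_le_of_agree {ω ω' : Shift N A} {m : ℕ} (h : ∀ k < m, ω.1 k = ω'.1 k) :
    dshift ω ω' ≤ 2 * N * (1/2) ^ m := by
  rw [dshift_eq, ← (F_summable ω ω').sum_add_tsum_nat_add m]
  have h1 : ∑ i ∈ Finset.range m, F ω ω' i = 0 := by
    apply Finset.sum_eq_zero
    intro i hi
    rw [F, h i (Finset.mem_range.mp hi)]
    simp
  rw [h1, zero_add]
  have h2 : ∑' i : ℕ, F ω ω' (i + m) ≤ ∑' i : ℕ, (N:ℝ) * (1/2)^(i+m) := by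
    apply Summable.tsum_le_tsum (fun i => F_le ω ω' (i+m))
    · exact (summable_nat_add_iff m).2 (F_summable ω ω')
    · exact ((summable_geometric_of_lt_one (by norm_num) (by norm_num)).mul_left _).comp_injective
        (add_left_injective m)
  refine h2.trans ?_
  have h3 : ∀ i : ℕ, (N:ℝ) * (1/2)^(i+m) = ((N:ℝ) * (1/2)^m) * (1/2)^i := by
    intro i; rw [pow_add]; ring
  simp_rw [h3]
  rw [tsum_mul_left, tsum_geometric_of_lt_one (by norm_num) (by norm_num)]
  norm_num
  ring_nf
  exact le_refl _

lemma dshift_ge {ω ω' : Shift N A} {k : ℕ} (h : ω.1 k ≠ ω'.1 k) :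
    (1/2:ℝ) ^ k ≤ dshift ω ω' := by
  rw [dshift_eq]
  refine le_trans ?_ (Summable.le_tsum (F_summable ω ω') k (fun j _ => F_nonneg ω ω' j))
  have h1 : (1:ℝ) ≤ |((ω.1 k : ℕ) : ℝ) - ((ω'.1 k : ℕ) : ℝ)| := by
    have hne : (ω.1 k : ℕ) ≠ (ω'.1 k : ℕ) := fun hc => h (Fin.ext hc)
    rcases Nat.lt_or_ge (ω.1 k : ℕ) (ω'.1 k : ℕ) with hlt | hge
    · rw [abs_sub_comm, abs_of_nonneg (by
        have : ((ω.1 k : ℕ) : ℝ) ≤ ((ω'.1 k : ℕ) : ℝ) := by exact_mod_cast hlt.le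
        linarith)]
      have : ((ω.1 k : ℕ) : ℝ) + 1 ≤ ((ω'.1 k : ℕ) : ℝ) := by exact_mod_cast hlt
      linarith
    · have hlt : (ω'.1 k : ℕ) < (ω.1 k : ℕ) := lt_of_le_of_ne hge hne.symm
      rw [abs_of_nonneg (by
        have : ((ω'.1 k : ℕ) : ℝ) ≤ ((ω.1 k : ℕ) : ℝ) := by exact_mod_cast hlt.le
        linarith)]
      have : ((ω'.1 k : ℕ) : ℝ) + 1 ≤ ((ω.1 k : ℕ) : ℝ) := by exact_mod_cast hlt
      linarith
  rw [F, one_div_pow]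
  exact div_le_div_of_nonneg_right h1 (by positivity)


lemma dshift_shift (ω ω' : Shift N A) :
    dshift (shiftMap ω) (shiftMap ω') ≤ 2 * dshift ω ω' := by
  have key : ∀ n, F (shiftMap ω) (shiftMap ω') n = 2 * F ω ω' (n+1) := by
    intro n
    show |((ω.1 (n+1) : ℕ) : ℝ) - ((ω'.1 (n+1) : ℕ) : ℝ)| / 2^n = 2 * (|_| / 2^(n+1))
    rw [pow_succ]
    field_simp
  rw [dshift_eq, dshift_eq]
  calc ∑' n, F (shiftMap ω) (shiftMap ω') n = ∑' n, 2 * F ω ω' (n+1) := by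
        exact tsum_congr key
  _ = 2 * ∑' n, F ω ω' (n+1) := tsum_mul_left
  _ ≤ 2 * ∑' n, F ω ω' n := by
        have := (F_summable ω ω').sum_add_tsum_nat_add 1
        have h0 : 0 ≤ ∑ i ∈ Finset.range 1, F ω ω' i :=
          Finset.sum_nonneg fun i _ => F_nonneg ω ω' i
        nlinarith [this]

lemma dshift_iter (k : ℕ) (ω ω' : Shift N A) :
    dshift (shiftMap^[k] ω) (shiftMap^[k] ω') ≤ 2^k * dshift ω ω' := by
  induction k with
  | zero => simp
  | succ k ih =>
    rw [Function.iterate_succ_apply', Function.iterate_succ_apply']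
    calc dshift (shiftMap (shiftMap^[k] ω)) (shiftMap (shiftMap^[k] ω'))
        ≤ 2 * dshift (shiftMap^[k] ω) (shiftMap^[k] ω') := dshift_shift _ _
    _ ≤ 2 * (2^k * dshift ω ω') := by linarith
    _ = 2^(k+1) * dshift ω ω' := by ring

end ShiftAux


lemma rpow_pow {x : ℝ} (hx : 0 ≤ x) (k : ℕ) (α : ℝ) : ((x ^ k : ℝ)) ^ α = (x ^ α) ^ k := by
  rw [← Real.rpow_natCast x k, ← Real.rpow_natCast (x ^ α) k, ← Real.rpow_mul hx,
    ← Real.rpow_mul hx, mul_comm]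

lemma holder_abs {f : Shift N A → ℝ} (hf : HolderCont f) :
    ∃ α > (0:ℝ), ∃ C ≥ (0:ℝ), ∀ ω ω', |f ω - f ω'| ≤ C * dshift ω ω' ^ α := by
  obtain ⟨α, hα, C, hC⟩ := hf
  exact ⟨α, hα, |C|, abs_nonneg C, fun ω ω' => (hC ω ω').trans
    (mul_le_mul_of_nonneg_right (le_abs_self C)
      (Real.rpow_nonneg (ShiftAux.dshift_nonneg ω ω') α))⟩

lemma holder_aux {f : Shift N A → ℝ} (hf : HolderCont f) :
    ∀ ε > (0:ℝ), ∃ m : ℕ, ∀ ω ω' : Shift N A, (∀ k < m, ω.1 k = ω'.1 k) → |f ω - f ω'| < ε := by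
  obtain ⟨α, hα, C, hC0, hC⟩ := holder_abs hf
  intro ε hε
  have hgeo : Tendsto (fun m : ℕ => C * (2*N)^α * (((1/2:ℝ)^α))^m) atTop (𝓝 0) := by
    have h := tendsto_pow_atTop_nhds_zero_of_lt_one
      (Real.rpow_nonneg (by norm_num : (0:ℝ) ≤ 1/2) α)
      (Real.rpow_lt_one (by norm_num : (0:ℝ) ≤ 1/2) (by norm_num : (1/2:ℝ) < 1) hα)
    simpa using h.const_mul (C * (2*(N:ℝ))^α)
  obtain ⟨m, hm⟩ := (hgeo.eventually (gt_mem_nhds hε)).exists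
  refine ⟨m, fun ω ω' hag => lt_of_le_of_lt ?_ hm⟩
  have hd := ShiftAux.dshift_le_of_agree hag
  have h2 : dshift ω ω' ^ α ≤ (2*N*(1/2)^m)^α :=
    Real.rpow_le_rpow (ShiftAux.dshift_nonneg _ _) hd hα.le
  calc |f ω - f ω'| ≤ C * dshift ω ω' ^ α := hC ω ω'
  _ ≤ C * (2*N*(1/2)^m)^α := mul_le_mul_of_nonneg_left h2 hC0
  _ = C * ((2*N)^α * ((1/2:ℝ)^m)^α) := by
      rw [← Real.mul_rpow (by positivity) (by positivity)]
  _ = C * (2*N)^α * ((1/2:ℝ)^α)^m := by rw [rpow_pow (by norm_num)]; ring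

lemma holder_continuous {f : Shift N A → ℝ} (hf : HolderCont f) : Continuous f := by
  rw [continuous_iff_continuousAt]
  intro ω
  rw [ContinuousAt, Metric.tendsto_nhds]
  intro ε hε
  obtain ⟨m, hm⟩ := holder_aux hf ε hε
  refine Filter.eventually_of_mem ((isOpen_cylW (fun k : Fin m => ω.1 k.1)).mem_nhds
    (word_mem ω m)) ?_
  intro x hx
  rw [Real.dist_eq]
  exact hm x ω (fun k hk => hx ⟨k, hk⟩)

lemma bounded_of_continuous {f : Shift N A → ℝ} (hc : Continuous f) :
    ∃ M : ℝ, 0 ≤ M ∧ ∀ ω, |f ω| ≤ M := by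
  obtain ⟨M, hM⟩ := (isCompact_range (continuous_abs.comp hc)).bddAbove
  exact ⟨max M 0, le_max_right _ _, fun ω =>
    le_trans (hM (Set.mem_range_self ω)) (le_max_left _ _)⟩

lemma abs_exp_sub_exp_le {x y M : ℝ} (hx : x ≤ M) (hy : y ≤ M) :
    |Real.exp x - Real.exp y| ≤ Real.exp M * |x - y| := by
  wlog h : y ≤ x generalizing x y
  · rw [abs_sub_comm, abs_sub_comm x y]; exact this hy hx (le_of_not_ge h)
  rw [abs_of_nonneg (sub_nonneg.2 (Real.exp_le_exp.2 h)), abs_of_nonneg (sub_nonneg.2 h)]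
  have key := Real.add_one_le_exp (y - x)
  have hex : Real.exp x * (1 - Real.exp (y - x)) = Real.exp x - Real.exp y := by
    rw [mul_sub, mul_one, ← Real.exp_add]
    ring_nf
  nlinarith [Real.exp_pos x, Real.exp_le_exp.2 hx, sub_nonneg.2 h]

lemma birkhoff_bound {f : Shift N A → ℝ} {M : ℝ} (hM : ∀ ω, |f ω| ≤ M) (m : ℕ) (ω : Shift N A) :
    |birkhoff f m ω| ≤ m * M := by
  calc |birkhoff f m ω| ≤ ∑ k ∈ Finset.range m, |f (shiftMap^[k] ω)| :=
        Finset.abs_sum_le_sum_abs _ _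
  _ ≤ ∑ k ∈ Finset.range m, M := Finset.sum_le_sum fun k _ => hM _
  _ = m * M := by rw [Finset.sum_const, Finset.card_range, nsmul_eq_mul]

lemma birkhoff_holder {f : Shift N A → ℝ} {α C : ℝ} (hα : 0 < α) (hC0 : 0 ≤ C)
    (hC : ∀ ω ω', |f ω - f ω'| ≤ C * dshift ω ω' ^ α) (m : ℕ) (ω ω' : Shift N A) :
    |birkhoff f m ω - birkhoff f m ω'| ≤
      (C * ∑ k ∈ Finset.range m, ((2:ℝ)^α)^k) * dshift ω ω' ^ α := by
  have hterm : ∀ k, |f (shiftMap^[k] ω) - f (shiftMap^[k] ω')| ≤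
      C * ((2:ℝ)^α)^k * dshift ω ω' ^ α := by
    intro k
    have h1 := hC (shiftMap^[k] ω) (shiftMap^[k] ω')
    have h2 : dshift (shiftMap^[k] ω) (shiftMap^[k] ω') ^ α ≤ (2^k * dshift ω ω') ^ α :=
      Real.rpow_le_rpow (ShiftAux.dshift_nonneg _ _) (ShiftAux.dshift_iter k ω ω') hα.le
    have h3 : ((2:ℝ)^k * dshift ω ω') ^ α = ((2:ℝ)^α)^k * dshift ω ω' ^ α := by
      rw [Real.mul_rpow (by positivity) (ShiftAux.dshift_nonneg _ _), rpow_pow (by norm_num)]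
    calc |f (shiftMap^[k] ω) - f (shiftMap^[k] ω')| ≤ C * dshift (shiftMap^[k] ω) (shiftMap^[k] ω') ^ α := h1
    _ ≤ C * (((2:ℝ)^α)^k * dshift ω ω' ^ α) := by
        rw [← h3]; exact mul_le_mul_of_nonneg_left h2 hC0
    _ = C * ((2:ℝ)^α)^k * dshift ω ω' ^ α := by ring
  unfold birkhoff
  rw [← Finset.sum_sub_distrib]
  calc |∑ k ∈ Finset.range m, (f (shiftMap^[k] ω) - f (shiftMap^[k] ω'))|
      ≤ ∑ k ∈ Finset.range m, |f (shiftMap^[k] ω) - f (shiftMap^[k] ω')| :=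
        Finset.abs_sum_le_sum_abs _ _
  _ ≤ ∑ k ∈ Finset.range m, C * ((2:ℝ)^α)^k * dshift ω ω' ^ α :=
        Finset.sum_le_sum fun k _ => hterm k
  _ = (C * ∑ k ∈ Finset.range m, ((2:ℝ)^α)^k) * dshift ω ω' ^ α := by
        simp only [Finset.sum_mul, Finset.mul_sum]
        try exact Finset.sum_congr rfl fun k _ => by ring

lemma holder_psi {f : Shift N A → ℝ} (hf : HolderCont f) {r : ℕ} (v : Fin r → Fin N) (m : ℕ) :
    HolderCont (Set.indicator (cylW v) (fun ω : Shift N A => Real.exp (-(birkhoff f m ω)))) := by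
  obtain ⟨α, hα, C, hC0, hC⟩ := holder_abs hf
  obtain ⟨M, hM0, hM⟩ := bounded_of_continuous (holder_continuous hf)
  set ψ := Set.indicator (cylW v) (fun ω : Shift N A => Real.exp (-(birkhoff f m ω))) with hψ
  set E := Real.exp (m * M) with hE
  have hE0 : 0 ≤ E := (Real.exp_pos _).le
  set K1 := C * ∑ k ∈ Finset.range m, ((2:ℝ)^α)^k with hK1
  have hK10 : 0 ≤ K1 := mul_nonneg hC0 (Finset.sum_nonneg fun k _ => by positivity)
  set K := E * K1 + E * ((2:ℝ)^r)^α with hK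
  have hK20 : (0:ℝ) ≤ E * ((2:ℝ)^r)^α := mul_nonneg hE0 (Real.rpow_nonneg (by positivity) _)
  refine ⟨α, hα, K, fun ω ω' => ?_⟩
  have hd0 := ShiftAux.dshift_nonneg ω ω'
  have hdα : 0 ≤ dshift ω ω' ^ α := Real.rpow_nonneg hd0 α
  have hSle : ∀ x : Shift N A, -(birkhoff f m x) ≤ m * M := by
    intro x
    have := birkhoff_bound hM m x
    have := abs_le.mp this
    linarith [this.1]
  have hexp_le : ∀ x : Shift N A, Real.exp (-(birkhoff f m x)) ≤ E := fun x =>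
    Real.exp_le_exp.2 (hSle x)
  have main_in : ∀ x y : Shift N A, x ∈ cylW v → y ∈ cylW v → |ψ x - ψ y| ≤ K * dshift x y ^ α := by
    intro x y hx hy
    rw [hψ, Set.indicator_of_mem hx, Set.indicator_of_mem hy]
    have h1 := abs_exp_sub_exp_le (hSle x) (hSle y)
    have h2 : |(-(birkhoff f m x)) - (-(birkhoff f m y))| = |birkhoff f m x - birkhoff f m y| := by
      rw [← abs_neg]; ring_nf
    have h3 := birkhoff_holder hα hC0 hC m x y
    have h4 : |Real.exp (-(birkhoff f m x)) - Real.exp (-(birkhoff f m y))| ≤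
        E * (K1 * dshift x y ^ α) := by
      refine h1.trans ?_
      rw [h2]
      exact mul_le_mul_of_nonneg_left h3 hE0
    refine h4.trans ?_
    have hdα' : 0 ≤ dshift x y ^ α := Real.rpow_nonneg (ShiftAux.dshift_nonneg x y) α
    rw [hK]
    nlinarith [mul_nonneg hE0 (Real.rpow_nonneg (show (0:ℝ) ≤ 2^r by positivity) α), hdα']
  have main_mixed : ∀ x y : Shift N A, x ∈ cylW v → y ∉ cylW v → |ψ x - ψ y| ≤ K * dshift x y ^ α := by
    intro x y hx hy
    rw [hψ, Set.indicator_of_mem hx, Set.indicator_of_notMem hy, sub_zero,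
      abs_of_nonneg (Real.exp_pos _).le]
    obtain ⟨k, hk⟩ : ∃ k : Fin r, y.1 k.1 ≠ v k := by
      by_contra hcon
      push_neg at hcon
      exact hy hcon
    have hne : x.1 k.1 ≠ y.1 k.1 := by rw [hx k]; exact fun hc => hk hc.symm
    have hdge : ((1/2:ℝ))^(r:ℕ) ≤ dshift x y := by
      refine le_trans ?_ (ShiftAux.dshift_ge hne)
      exact pow_le_pow_of_le_one (by norm_num) (by norm_num) k.2.le
    have hdgeα : ((1/2:ℝ)^(r:ℕ))^α ≤ dshift x y ^ α :=
      Real.rpow_le_rpow (by positivity) hdge hα.le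
    have hprod : ((2:ℝ)^r)^α * ((1/2:ℝ)^(r:ℕ))^α = 1 := by
      rw [← Real.mul_rpow (by positivity) (by positivity), ← mul_pow]
      norm_num
    calc Real.exp (-(birkhoff f m x)) ≤ E := hexp_le x
    _ = E * (((2:ℝ)^r)^α * ((1/2:ℝ)^(r:ℕ))^α) := by rw [hprod, mul_one]
    _ ≤ E * (((2:ℝ)^r)^α * dshift x y ^ α) := by
        refine mul_le_mul_of_nonneg_left ?_ hE0
        exact mul_le_mul_of_nonneg_left hdgeα (Real.rpow_nonneg (by positivity) _)
    _ = (E * ((2:ℝ)^r)^α) * dshift x y ^ α := by ring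
    _ ≤ K * dshift x y ^ α := by
        refine mul_le_mul_of_nonneg_right ?_ (Real.rpow_nonneg (ShiftAux.dshift_nonneg x y) α)
        rw [hK]
        nlinarith [mul_nonneg hE0 hK10]
  by_cases hx : ω ∈ cylW v <;> by_cases hy : ω' ∈ cylW v
  · exact main_in ω ω' hx hy
  · exact main_mixed ω ω' hx hy
  · rw [abs_sub_comm]
    have := main_mixed ω' ω hy hx
    calc |ψ ω' - ψ ω| ≤ K * dshift ω' ω ^ α := this
    _ = K * dshift ω ω' ^ α := by
        congr 2
        unfold dshift
        exact tsum_congr fun n => by rw [abs_sub_comm]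
  · rw [hψ, Set.indicator_of_notMem hx, Set.indicator_of_notMem hy, sub_self, abs_zero, hK]
    exact mul_nonneg (add_nonneg (mul_nonneg hE0 hK10) hK20) hdα

lemma measurable_Rset (c : Fin N) : MeasurableSet {x : Shift N A | A c (x.1 0) = 1} := by
  have h : {x : Shift N A | A c (x.1 0) = 1} =
      ⋃ a : Fin N, ⋃ (_ : A c a = 1), {x : Shift N A | x.1 0 = a} := by
    ext x
    simp only [Set.mem_iUnion, Set.mem_setOf_eq]
    exact ⟨fun h => ⟨x.1 0, h, rfl⟩, fun ⟨a, ha, hx⟩ => by rw [hx]; exact ha⟩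
  rw [h]
  exact MeasurableSet.iUnion fun a => MeasurableSet.iUnion fun _ =>
    (isOpen_coord 0 a).measurableSet

lemma transfer_psi (f : Shift N A → ℝ) {r : ℕ} (v : Fin (r+1) → Fin N) (m : ℕ) (ω : Shift N A) :
    transferOp f (Set.indicator (cylW v) (fun x : Shift N A => Real.exp (-(birkhoff f (m+1) x)))) ω =
    Set.indicator (cylW (Fin.tail v) ∩ {x : Shift N A | A (v 0) (x.1 0) = 1})
      (fun x : Shift N A => Real.exp (-(birkhoff f m x))) ω := by
  classical
  rw [transfer_sum]
  by_cases hcond : ω ∈ cylW (Fin.tail v) ∩ {x : Shift N A | A (v 0) (x.1 0) = 1}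
  · have h0 : A (v 0) (ω.1 0) = 1 := hcond.2
    rw [Set.indicator_of_mem hcond]
    rw [Finset.sum_eq_single (v 0)]
    · rw [if_pos h0]
      have hmem : consS (v 0) ω ∈ cylW v := by
        intro k
        rw [consS_val _ _ h0]
        rcases Fin.eq_zero_or_eq_succ k with rfl | ⟨j, rfl⟩
        · rfl
        · exact hcond.1 j
      rw [Set.indicator_of_mem hmem]
      have hb : birkhoff f (m+1) (consS (v 0) ω) = f (consS (v 0) ω) + birkhoff f m ω := by
        rw [birkhoff_succ, shift_consS _ _ h0]
      rw [hb, ← Real.exp_add]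
      congr 1
      ring
    · intro a _ hne
      by_cases ha : A a (ω.1 0) = 1
      · rw [if_pos ha]
        have hnm : consS a ω ∉ cylW v := by
          intro hmem
          have h0' := hmem 0
          simp only [Fin.val_zero] at h0'
          rw [consS_zero _ _ ha] at h0'
          exact hne h0'
        rw [Set.indicator_of_notMem hnm, mul_zero]
      · rw [if_neg ha]
    · intro h; exact absurd (Finset.mem_univ _) h
  · rw [Set.indicator_of_notMem hcond]
    apply Finset.sum_eq_zero
    intro a _
    by_cases ha : A a (ω.1 0) = 1
    · rw [if_pos ha]
      have hnm : consS a ω ∉ cylW v := by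
        intro hmem
        apply hcond
        have ha0 : (consS a ω).1 0 = a := consS_zero _ _ ha
        have hv0 : a = v 0 := by
          have h0' := hmem 0
          simp only [Fin.val_zero] at h0'
          rw [ha0] at h0'
          exact h0'
        constructor
        · intro j
          have hj := hmem j.succ
          rw [consS_val _ _ ha] at hj
          exact hj
        · show A (v 0) (ω.1 0) = 1
          rw [← hv0]; exact ha
      rw [Set.indicator_of_notMem hnm, mul_zero]
    · rw [if_neg ha]

section KeyLemmas

variable {f : Shift N A → ℝ} {lam : ℝ} {ν : Measure (Shift N A)}

lemma key_lemma (hf : HolderCont f)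
    (heig : ∀ φ : Shift N A → ℝ, HolderCont φ →
      ∫ ω, transferOp f φ ω ∂ν = lam * ∫ ω, φ ω ∂ν) :
    ∀ (m s : ℕ) (v : Fin (s + m) → Fin N),
      (∀ (k : ℕ) (h : k + 1 < s + m), A (v ⟨k, by omega⟩) (v ⟨k+1, h⟩) = 1) →
      1 ≤ s →
      lam ^ m * ∫ ω, Set.indicator (cylW v)
          (fun x : Shift N A => Real.exp (-(birkhoff f m x))) ω ∂ν =
        (ν (cylW (fun k : Fin s => v ⟨m + k.1, by omega⟩))).toReal := by
  intro m
  induction m with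
  | zero =>
    intro s v hadm hs
    have hveq : (fun k : Fin s => v ⟨0 + k.1, by omega⟩) = v := by
      funext k
      exact congrArg v (Fin.ext (by simp))
    rw [pow_zero, one_mul, hveq]
    have hind : Set.indicator (cylW v) (fun x : Shift N A => Real.exp (-(birkhoff f 0 x)))
        = Set.indicator (cylW v) (fun _ : Shift N A => (1:ℝ)) := by
      apply Set.indicator_congr
      intro x _
      simp [birkhoff]
    rw [hind]
    exact integral_indicator_one (measurable_cylW v)
  | succ m IH =>
    intro s v hadm hs
    have heq := heig _ (holder_psi hf v (m+1))
    have htp := transfer_psi f v m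
    have hcollapse : cylW (Fin.tail v) ∩ {x : Shift N A | A (v (0 : Fin (s+m+1))) (x.1 0) = 1}
        = (cylW (Fin.tail v) : Set (Shift N A)) := by
      apply Set.inter_eq_left.2
      intro x hx
      show A (v (0 : Fin (s+m+1))) (x.1 0) = 1
      have hmem : ∀ k : Fin (s+m), x.1 k.1 = Fin.tail v k := hx
      have h0 : x.1 0 = v ((⟨0, by first | omega | (simp only [Nat.add_eq]; omega)⟩ : Fin (s+m)).succ) :=
        hmem ⟨0, by first | omega | (simp only [Nat.add_eq]; omega)⟩
      rw [h0]
      have hA := hadm 0 (by omega)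
      convert hA using 3 <;>
        exact Fin.ext (by simp [Fin.val_succ, Nat.add_eq, Fin.tail])
    have hadm' : ∀ (k : ℕ) (h : k + 1 < s + m),
        A (Fin.tail v ⟨k, by first | omega | (simp only [Nat.add_eq] at h ⊢; omega)⟩) (Fin.tail v ⟨k+1, h⟩) = 1 := by
      intro k h
      have hA := hadm (k+1) (by first | omega | (simp only [Nat.add_eq] at h; omega))
      convert hA using 3 <;>
        exact Fin.ext (by simp [Fin.val_succ, Nat.add_eq, Fin.tail])
    have hdrop : (fun k : Fin s => Fin.tail v ⟨m + k.1, by first | omega | (simp only [Nat.add_eq]; omega)⟩)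
        = (fun k : Fin s => v ⟨m + 1 + k.1, by first | omega | (simp only [Nat.add_eq]; omega)⟩) := by
      funext k
      show v ((⟨m + k.1, by first | omega | (simp only [Nat.add_eq]; omega)⟩ : Fin (s+m)).succ)
          = v ⟨m + 1 + k.1, by first | omega | (simp only [Nat.add_eq]; omega)⟩
      exact congrArg v (Fin.ext (by simp [Fin.val_succ, Nat.add_eq]; omega))
    calc lam ^ (m+1) * ∫ ω, Set.indicator (cylW v)
          (fun x : Shift N A => Real.exp (-(birkhoff f (m+1) x))) ω ∂ν
        = lam ^ m * (lam * ∫ ω, Set.indicator (cylW v)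
          (fun x : Shift N A => Real.exp (-(birkhoff f (m+1) x))) ω ∂ν) := by ring
      _ = lam ^ m * ∫ ω, transferOp f (Set.indicator (cylW v)
          (fun x : Shift N A => Real.exp (-(birkhoff f (m+1) x)))) ω ∂ν := by rw [heq]
      _ = lam ^ m * ∫ ω, Set.indicator (cylW (Fin.tail v))
          (fun x : Shift N A => Real.exp (-(birkhoff f m x))) ω ∂ν := by
            simp only [htp, hcollapse]
      _ = (ν (cylW (fun k : Fin s =>
            Fin.tail v ⟨m + k.1, by first | omega | (simp only [Nat.add_eq]; omega)⟩))).toReal :=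
            IH s (Fin.tail v) hadm' hs
      _ = (ν (cylW (fun k : Fin s =>
            v ⟨m + 1 + k.1, by first | omega | (simp only [Nat.add_eq]; omega)⟩))).toReal := by
            rw [hdrop]

lemma key_lemma0 (hf : HolderCont f)
    (heig : ∀ φ : Shift N A → ℝ, HolderCont φ →
      ∫ ω, transferOp f φ ω ∂ν = lam * ∫ ω, φ ω ∂ν) :
    ∀ (m : ℕ) (v : Fin (m + 1) → Fin N),
      (∀ (k : ℕ) (h : k + 1 < m + 1), A (v ⟨k, by omega⟩) (v ⟨k+1, h⟩) = 1) →
      lam ^ (m+1) * ∫ ω, Set.indicator (cylW v)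
          (fun x : Shift N A => Real.exp (-(birkhoff f (m+1) x))) ω ∂ν =
        (ν {x : Shift N A | A (v (Fin.last m)) (x.1 0) = 1}).toReal := by
  intro m
  induction m with
  | zero =>
    intro v _
    have heq := heig _ (holder_psi hf v 1)
    have htp := transfer_psi f v 0
    have huniv : (cylW (Fin.tail v) : Set (Shift N A)) = Set.univ := by
      ext x
      simp only [cylW, Set.mem_setOf_eq, Set.mem_univ, iff_true]
      intro k
      exact k.elim0
    have hset : cylW (Fin.tail v) ∩ {x : Shift N A | A (v 0) (x.1 0) = 1}
        = {x : Shift N A | A (v 0) (x.1 0) = 1} := by rw [huniv, Set.univ_inter]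
    have hlast : v (Fin.last 0) = v 0 := congrArg v (Fin.ext (by simp))
    calc lam ^ 1 * ∫ ω, Set.indicator (cylW v)
          (fun x : Shift N A => Real.exp (-(birkhoff f 1 x))) ω ∂ν
        = lam * ∫ ω, Set.indicator (cylW v)
          (fun x : Shift N A => Real.exp (-(birkhoff f 1 x))) ω ∂ν := by ring
      _ = ∫ ω, transferOp f (Set.indicator (cylW v)
          (fun x : Shift N A => Real.exp (-(birkhoff f 1 x)))) ω ∂ν := (heq).symm
      _ = ∫ ω, Set.indicator {x : Shift N A | A (v 0) (x.1 0) = 1}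
          (fun x : Shift N A => Real.exp (-(birkhoff f 0 x))) ω ∂ν := by
            simp only [htp, hset]
      _ = ∫ ω, Set.indicator {x : Shift N A | A (v 0) (x.1 0) = 1}
          (fun _ : Shift N A => (1:ℝ)) ω ∂ν := by
            have hind : Set.indicator {x : Shift N A | A (v 0) (x.1 0) = 1}
                (fun x : Shift N A => Real.exp (-(birkhoff f 0 x)))
                = Set.indicator {x : Shift N A | A (v 0) (x.1 0) = 1}
                (fun _ : Shift N A => (1:ℝ)) :=
              Set.indicator_congr fun x _ => by simp [birkhoff]
            rw [hind]
      _ = (ν {x : Shift N A | A (v 0) (x.1 0) = 1}).toReal :=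
            integral_indicator_one (measurable_Rset (v 0))
      _ = (ν {x : Shift N A | A (v (Fin.last 0)) (x.1 0) = 1}).toReal := by rw [hlast]
  | succ m IH =>
    intro v hadm
    have heq := heig _ (holder_psi hf v (m+2))
    have htp := transfer_psi f v (m+1)
    have hcollapse : cylW (Fin.tail v) ∩ {x : Shift N A | A (v 0) (x.1 0) = 1}
        = (cylW (Fin.tail v) : Set (Shift N A)) := by
      apply Set.inter_eq_left.2
      intro x hx
      show A (v 0) (x.1 0) = 1
      have h0 : x.1 0 = v ((⟨0, by omega⟩ : Fin (m+1)).succ) := hx ⟨0, by omega⟩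
      rw [h0]
      have hA := hadm 0 (by omega)
      convert hA using 3 <;>
        exact Fin.ext (by simp [Fin.val_succ, Nat.add_eq, Fin.tail])
    have hadm' : ∀ (k : ℕ) (h : k + 1 < m + 1),
        A (Fin.tail v ⟨k, by omega⟩) (Fin.tail v ⟨k+1, h⟩) = 1 := by
      intro k h
      have hA := hadm (k+1) (by omega)
      convert hA using 3 <;>
        exact Fin.ext (by simp [Fin.val_succ, Nat.add_eq, Fin.tail])
    have hlast : Fin.tail v (Fin.last m) = v (Fin.last (m+1)) :=
      congrArg v (Fin.ext (by simp [Fin.val_succ, Fin.last]))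
    calc lam ^ (m+2) * ∫ ω, Set.indicator (cylW v)
          (fun x : Shift N A => Real.exp (-(birkhoff f (m+2) x))) ω ∂ν
        = lam ^ (m+1) * (lam * ∫ ω, Set.indicator (cylW v)
          (fun x : Shift N A => Real.exp (-(birkhoff f (m+2) x))) ω ∂ν) := by ring
      _ = lam ^ (m+1) * ∫ ω, transferOp f (Set.indicator (cylW v)
          (fun x : Shift N A => Real.exp (-(birkhoff f (m+2) x)))) ω ∂ν := by rw [heq]
      _ = lam ^ (m+1) * ∫ ω, Set.indicator (cylW (Fin.tail v))
          (fun x : Shift N A => Real.exp (-(birkhoff f (m+1) x))) ω ∂ν := by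
            simp only [htp, hcollapse]
      _ = (ν {x : Shift N A | A (Fin.tail v (Fin.last m)) (x.1 0) = 1}).toReal :=
            IH (Fin.tail v) hadm'
      _ = (ν {x : Shift N A | A (v (Fin.last (m+1))) (x.1 0) = 1}).toReal := by rw [hlast]

end KeyLemmas

lemma continuous_shiftMap : Continuous (shiftMap : Shift N A → Shift N A) := by
  letI : UniformSpace (Fin N) := ⊥
  apply Continuous.subtype_mk
  exact continuous_pi fun n => (continuous_apply (n+1)).comp continuous_val

lemma measurable_shiftMap : Measurable (shiftMap : Shift N A → Shift N A) :=
  continuous_shiftMap.measurable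

lemma continuous_birkhoff {f : Shift N A → ℝ} (hf : Continuous f) (n : ℕ) :
    Continuous (birkhoff f n) := by
  unfold birkhoff
  apply continuous_finset_sum
  intro k _
  have hit : Continuous (shiftMap^[k] : Shift N A → Shift N A) :=
    Continuous.iterate continuous_shiftMap k
  exact hf.comp hit

lemma integrable_cont {g : Shift N A → ℝ} (hg : Continuous g) (μ : Measure (Shift N A))
    [IsFiniteMeasure μ] : Integrable g μ := by
  obtain ⟨M, hM0, hM⟩ := bounded_of_continuous hg
  exact Integrable.mono' (integrable_const M) hg.aestronglyMeasurable
    (Filter.Eventually.of_forall fun x => hM x)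

lemma isPiSystem_cylSets : IsPiSystem (cylSets N A) := by
  have key : ∀ (m1 m2 : ℕ) (u : Fin m1 → Fin N) (v : Fin m2 → Fin N), m1 ≤ m2 →
      ∀ y : Shift N A, y ∈ cylW u → y ∈ cylW v →
      (cylW u ∩ cylW v : Set (Shift N A)) = cylW v := by
    intro m1 m2 u v h y hyu hyv
    apply Set.inter_eq_right.2
    intro x hx k
    exact (hx ⟨k.1, by omega⟩).trans ((hyv ⟨k.1, by omega⟩).symm.trans (hyu k))
  rintro s ⟨m1, u, rfl⟩ t ⟨m2, v, rfl⟩ hne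
  obtain ⟨y, hyu, hyv⟩ := hne
  rcases le_total m1 m2 with h | h
  · rw [key m1 m2 u v h y hyu hyv]
    exact ⟨m2, v, rfl⟩
  · rw [Set.inter_comm, key m2 m1 v u h y hyv hyu]
    exact ⟨m1, u, rfl⟩

section PmapDef

def wcat {n : ℕ} (w : Fin (n + 1) → Fin N) (x : Shift N A) : ℕ → Fin N :=
  fun k => if hk : k < n + 1 then w ⟨k, hk⟩ else x.1 (k - (n + 1))

lemma wcat_lt {n : ℕ} (w : Fin (n + 1) → Fin N) (x : Shift N A) (k : ℕ) (hk : k < n + 1) :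
    wcat w x k = w ⟨k, hk⟩ := dif_pos hk

lemma wcat_ge {n : ℕ} (w : Fin (n + 1) → Fin N) (x : Shift N A) (k : ℕ) (hk : ¬ k < n + 1) :
    wcat w x k = x.1 (k - (n + 1)) := dif_neg hk

lemma wcat_adm {n : ℕ} (w : Fin (n + 1) → Fin N)
    (hadm : ∀ (k : ℕ) (h : k + 1 < n + 1), A (w ⟨k, by omega⟩) (w ⟨k+1, h⟩) = 1)
    (x : Shift N A) (hx : A (w (Fin.last n)) (x.1 0) = 1) :
    ∀ j, A (wcat w x j) (wcat w x (j + 1)) = 1 := by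
  intro j
  unfold wcat
  rcases lt_trichotomy (j+1) (n+1) with h | h | h
  · rw [dif_pos (by omega), dif_pos h]
    exact hadm j h
  · rw [dif_pos (by omega), dif_neg (by omega)]
    have h0 : j + 1 - (n + 1) = 0 := by omega
    rw [h0]
    convert hx using 3
    exact Fin.ext (by simp [Fin.val_last]; omega)
  · rw [dif_neg (by omega), dif_neg (by omega)]
    have e1 : j + 1 - (n + 1) = (j - (n + 1)) + 1 := by omega
    rw [e1]
    exact x.2 (j - (n + 1))

open scoped Classical in
noncomputable def pmapS {n : ℕ} (w : Fin (n + 1) → Fin N)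
    (hadm : ∀ (k : ℕ) (h : k + 1 < n + 1), A (w ⟨k, by omega⟩) (w ⟨k+1, h⟩) = 1) :
    Shift N A → Shift N A :=
  fun x => if hx : A (w (Fin.last n)) (x.1 0) = 1
    then ⟨wcat w x, wcat_adm w hadm x hx⟩ else x

lemma pmap_val {n : ℕ} (w : Fin (n + 1) → Fin N)
    (hadm : ∀ (k : ℕ) (h : k + 1 < n + 1), A (w ⟨k, by omega⟩) (w ⟨k+1, h⟩) = 1)
    (x : Shift N A) (hx : A (w (Fin.last n)) (x.1 0) = 1) :
    (pmapS w hadm x).1 = wcat w x := by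
  unfold pmapS
  exact congrArg Subtype.val (dif_pos hx)

lemma measurable_pmap {n : ℕ} (w : Fin (n + 1) → Fin N)
    (hadm : ∀ (k : ℕ) (h : k + 1 < n + 1), A (w ⟨k, by omega⟩) (w ⟨k+1, h⟩) = 1) :
    Measurable (pmapS w hadm) := by
  letI : UniformSpace (Fin N) := ⊥
  have hR : MeasurableSet {x : Shift N A | A (w (Fin.last n)) (x.1 0) = 1} :=
    measurable_Rset _
  apply measurable_of_restrict_of_restrict_compl hR
  · have hres : Set.domRestrict {x : Shift N A | A (w (Fin.last n)) (x.1 0) = 1} (pmapS w hadm)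
        = fun x => (⟨wcat w x.1, wcat_adm w hadm x.1 x.2⟩ : Shift N A) := by
      funext x
      show pmapS w hadm x.1 = _
      apply Subtype.ext
      rw [pmap_val w hadm x.1 x.2]
    rw [hres]
    apply Continuous.measurable
    apply Continuous.subtype_mk
    apply continuous_pi
    intro k
    by_cases hk : k < n + 1
    · have : (fun x : {x : Shift N A | A (w (Fin.last n)) (x.1 0) = 1} => wcat w x.1 k)
          = fun _ => w ⟨k, hk⟩ := by
        funext x; unfold wcat; rw [dif_pos hk]
      rw [this]
      exact continuous_const
    · have : (fun x : {x : Shift N A | A (w (Fin.last n)) (x.1 0) = 1} => wcat w x.1 k)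
          = fun x => x.1.1 (k - (n+1)) := by
        funext x; unfold wcat; rw [dif_neg hk]
      rw [this]
      exact (continuous_apply (k - (n+1))).comp (continuous_val.comp continuous_subtype_val)
  · have hres : Set.domRestrict {x : Shift N A | A (w (Fin.last n)) (x.1 0) = 1}ᶜ (pmapS w hadm)
        = fun x => x.1 := by
      funext x
      show pmapS w hadm x.1 = _
      unfold pmapS
      exact dif_neg x.2
    rw [hres]
    exact measurable_subtype_coe

lemma image_eq {n : ℕ} (w : Fin (n + 1) → Fin N)
    (hadm : ∀ (k : ℕ) (h : k + 1 < n + 1), A (w ⟨k, by omega⟩) (w ⟨k+1, h⟩) = 1)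
    (E : Set (Shift N A)) (hEw : E ⊆ cylW w) :
    shiftMap^[n+1] '' E =
      pmapS w hadm ⁻¹' E ∩ {x : Shift N A | A (w (Fin.last n)) (x.1 0) = 1} := by
  ext y
  constructor
  · rintro ⟨x, hxE, rfl⟩
    have hxw : ∀ k : Fin (n+1), x.1 k.1 = w k := hEw hxE
    have hyR : A (w (Fin.last n)) ((shiftMap^[n+1] x).1 0) = 1 := by
      rw [shift_iter_apply]
      have e0 : x.1 (0 + (n+1)) = x.1 (n+1) := congrArg x.1 (by omega)
      rw [e0, ← hxw (Fin.last n)]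
      exact x.2 n
    refine ⟨?_, hyR⟩
    show pmapS w hadm (shiftMap^[n+1] x) ∈ E
    have hpx : pmapS w hadm (shiftMap^[n+1] x) = x := by
      apply Subtype.ext
      funext k
      rw [pmap_val w hadm _ hyR]
      unfold wcat
      by_cases hk : k < n + 1
      · rw [dif_pos hk]
        exact (hxw ⟨k, hk⟩).symm
      · rw [dif_neg hk, shift_iter_apply]
        exact congrArg x.1 (by omega)
    rw [hpx]
    exact hxE
  · rintro ⟨hyE, hyR⟩
    refine ⟨pmapS w hadm y, hyE, ?_⟩
    apply Subtype.ext
    funext k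
    show (shiftMap^[n+1] (pmapS w hadm y)).1 k = y.1 k
    rw [shift_iter_apply, pmap_val w hadm _ hyR]
    unfold wcat
    rw [dif_neg (by omega)]
    exact congrArg y.1 (by omega)

end PmapDef

lemma main_jacobian {f : Shift N A → ℝ} {lam : ℝ} {ν : Measure (Shift N A)}
    [IsProbabilityMeasure ν] (hf : HolderCont f) (hlam : 0 < lam)
    (heig : ∀ φ : Shift N A → ℝ, HolderCont φ →
      ∫ ω, transferOp f φ ω ∂ν = lam * ∫ ω, φ ω ∂ν) :
    ∀ (n : ℕ) (w : Fin n → Fin N) (E : Set (Shift N A)), MeasurableSet E → E ⊆ cylW w →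
      (ν (shiftMap^[n] '' E)).toReal =
        ∫ ω in E, lam ^ n * Real.exp (-(birkhoff f n ω)) ∂ν := by
  intro n
  cases n with
  | zero =>
    intro w E hE hEw
    have himg : shiftMap^[0] '' E = E := by simp
    rw [himg]
    rw [setIntegral_congr_fun hE (fun x _ => by simp [birkhoff] :
      Set.EqOn (fun ω => lam ^ 0 * Real.exp (-(birkhoff f 0 ω))) (fun _ => (1:ℝ)) E)]
    simp
    rfl
  | succ n' =>
    intro w E hE hEw
    by_cases hadm : ∀ (k : ℕ) (h : k + 1 < n' + 1), A (w ⟨k, by omega⟩) (w ⟨k+1, h⟩) = 1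
    case neg =>
      push_neg at hadm
      obtain ⟨k, h, hk⟩ := hadm
      have hempty : (cylW w : Set (Shift N A)) = ∅ := by
        ext x
        simp only [Set.mem_empty_iff_false, iff_false]
        intro hx
        apply hk
        rw [← hx ⟨k, by omega⟩, ← hx ⟨k+1, h⟩]
        exact x.2 k
      have hE0 : E = ∅ := Set.subset_empty_iff.mp (hempty ▸ hEw)
      rw [hE0]
      simp
    case pos =>
      have hgc : Continuous (fun x : Shift N A =>
          lam ^ (n'+1) * Real.exp (-(birkhoff f (n'+1) x))) :=
        continuous_const.mul
          (Real.continuous_exp.comp (continuous_birkhoff (holder_continuous hf) (n'+1)).neg)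
      have hgnn : ∀ x : Shift N A, 0 ≤ lam ^ (n'+1) * Real.exp (-(birkhoff f (n'+1) x)) :=
        fun x => mul_nonneg (pow_nonneg hlam.le _) (Real.exp_pos _).le
      have hμ2app : ∀ s : Set (Shift N A), MeasurableSet s →
          (ν.restrict (cylW w)).withDensity
            (fun x => ENNReal.ofReal (lam ^ (n'+1) * Real.exp (-(birkhoff f (n'+1) x)))) s
          = ENNReal.ofReal
            (∫ x in s ∩ cylW w, lam ^ (n'+1) * Real.exp (-(birkhoff f (n'+1) x)) ∂ν) := by
        intro s hs
        rw [withDensity_apply _ hs, Measure.restrict_restrict hs]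
        rw [← ofReal_integral_eq_lintegral_ofReal (integrable_cont hgc _)
          (Filter.Eventually.of_forall fun x => hgnn x)]
      have hμ1app : ∀ s : Set (Shift N A), MeasurableSet s →
          ((ν.restrict {x : Shift N A | A (w (Fin.last n')) (x.1 0) = 1}).map (pmapS w hadm)) s
          = ν (pmapS w hadm ⁻¹' s ∩ {x : Shift N A | A (w (Fin.last n')) (x.1 0) = 1}) := by
        intro s hs
        rw [Measure.map_apply (measurable_pmap w hadm) hs,
          Measure.restrict_apply (measurable_pmap w hadm hs)]
      have hKEY0 := key_lemma0 hf heig n' w hadm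
      have hIntW : (ν {x : Shift N A | A (w (Fin.last n')) (x.1 0) = 1}).toReal
          = ∫ x in cylW w, lam ^ (n'+1) * Real.exp (-(birkhoff f (n'+1) x)) ∂ν := by
        rw [← hKEY0, integral_indicator (measurable_cylW w), integral_const_mul]
      have hAgreeUniv :
          ((ν.restrict {x : Shift N A | A (w (Fin.last n')) (x.1 0) = 1}).map (pmapS w hadm))
            Set.univ
          = (ν.restrict (cylW w)).withDensity
            (fun x => ENNReal.ofReal (lam ^ (n'+1) * Real.exp (-(birkhoff f (n'+1) x))))
            Set.univ := by
        rw [hμ1app _ MeasurableSet.univ, hμ2app _ MeasurableSet.univ,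
          Set.preimage_univ, Set.univ_inter, Set.univ_inter,
          ← hIntW, ENNReal.ofReal_toReal (measure_ne_top ν _)]
      have hAgree : ∀ s ∈ cylSets N A,
          ((ν.restrict {x : Shift N A | A (w (Fin.last n')) (x.1 0) = 1}).map (pmapS w hadm)) s
          = (ν.restrict (cylW w)).withDensity
            (fun x => ENNReal.ofReal (lam ^ (n'+1) * Real.exp (-(birkhoff f (n'+1) x)))) s := by
        rintro s ⟨m, u, rfl⟩
        rw [hμ1app _ (measurable_cylW u), hμ2app _ (measurable_cylW u)]
        rcases Nat.lt_or_ge m (n'+2) with hm | hm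
        · by_cases hpre : ∀ k : Fin m, w ⟨k.1, by omega⟩ = u k
          · have h1 : pmapS w hadm ⁻¹' cylW u ∩ {x : Shift N A | A (w (Fin.last n')) (x.1 0) = 1}
                = {x : Shift N A | A (w (Fin.last n')) (x.1 0) = 1} := by
              apply Set.inter_eq_right.2
              intro x hx
              show pmapS w hadm x ∈ cylW u
              intro k
              have h2 : (pmapS w hadm x).1 k.1 = w ⟨k.1, by omega⟩ := by
                rw [pmap_val w hadm x hx]
                unfold wcat
                rw [dif_pos (by omega)]
              rw [h2]
              exact hpre k
            have h2 : cylW u ∩ cylW w = (cylW w : Set (Shift N A)) := by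
              apply Set.inter_eq_right.2
              intro x hx k
              exact (hx ⟨k.1, by omega⟩).trans (hpre k)
            rw [h1, h2, ← hIntW, ENNReal.ofReal_toReal (measure_ne_top ν _)]
          · push_neg at hpre
            obtain ⟨k, hk⟩ := hpre
            have h1 : pmapS w hadm ⁻¹' cylW u ∩ {x : Shift N A | A (w (Fin.last n')) (x.1 0) = 1}
                = (∅ : Set (Shift N A)) := by
              ext x
              simp only [Set.mem_inter_iff, Set.mem_preimage, Set.mem_empty_iff_false,
                iff_false, not_and]
              intro hxu hxR
              apply hk
              have h2 : (pmapS w hadm x).1 k.1 = u k := hxu k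
              rw [pmap_val w hadm x hxR, wcat_lt w x k.1 (by omega)] at h2
              exact h2
            have h2 : cylW u ∩ cylW w = (∅ : Set (Shift N A)) := by
              ext x
              simp only [Set.mem_inter_iff, Set.mem_empty_iff_false, iff_false, not_and]
              intro hxu hxw
              exact hk ((hxw (⟨k.1, by omega⟩ : Fin (n'+1))).symm.trans (hxu k)).symm.symm
            rw [h1, h2]
            simp
        · by_cases hpre : ∀ k : Fin (n'+1), w k = u ⟨k.1, by omega⟩
          · have h1 : pmapS w hadm ⁻¹' cylW u ∩ {x : Shift N A | A (w (Fin.last n')) (x.1 0) = 1}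
                = cylW (fun j : Fin (m - (n'+1)) => u ⟨n'+1 + j.1, by omega⟩)
                  ∩ {x : Shift N A | A (w (Fin.last n')) (x.1 0) = 1} := by
              ext x
              simp only [Set.mem_inter_iff, Set.mem_preimage]
              constructor
              · rintro ⟨hxu, hxR⟩
                refine ⟨?_, hxR⟩
                intro j
                have h2 : (pmapS w hadm x).1 (n'+1 + j.1) = u ⟨n'+1 + j.1, by omega⟩ :=
                  hxu (⟨n'+1 + j.1, by omega⟩ : Fin m)
                rw [pmap_val w hadm x hxR, wcat_ge w x (n'+1 + j.1) (by omega),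
                  show n'+1 + j.1 - (n'+1) = j.1 from by omega] at h2
                exact h2
              · rintro ⟨hxu', hxR⟩
                refine ⟨?_, hxR⟩
                intro k
                show (pmapS w hadm x).1 k.1 = u k
                rw [pmap_val w hadm x hxR]
                unfold wcat
                by_cases hk : k.1 < n'+1
                · rw [dif_pos hk]
                  exact hpre ⟨k.1, hk⟩
                · rw [dif_neg hk]
                  have h3 := hxu' (⟨k.1 - (n'+1), by omega⟩ : Fin (m - (n'+1)))
                  exact h3.trans (congrArg u (Fin.ext (by simp; omega)))
            by_cases hadm_u : ∀ (k : ℕ) (h : k + 1 < m), A (u ⟨k, by omega⟩) (u ⟨k+1, h⟩) = 1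
            · have hsub : cylW (fun j : Fin (m - (n'+1)) => u ⟨n'+1 + j.1, by omega⟩)
                  ⊆ {x : Shift N A | A (w (Fin.last n')) (x.1 0) = 1} := by
                intro x hx
                show A (w (Fin.last n')) (x.1 0) = 1
                have h0 : x.1 0 = u ⟨n'+1, by omega⟩ :=
                  (hx (⟨0, by omega⟩ : Fin (m - (n'+1)))).trans (congrArg u (Fin.ext (by simp)))
                rw [h0, hpre (Fin.last n')]
                have h4 := hadm_u n' (by omega)
                convert h4 using 3 <;> exact Fin.ext (by simp [Fin.val_last])
              have h1' : cylW (fun j : Fin (m - (n'+1)) => u ⟨n'+1 + j.1, by omega⟩)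
                    ∩ {x : Shift N A | A (w (Fin.last n')) (x.1 0) = 1}
                  = cylW (fun j : Fin (m - (n'+1)) => u ⟨n'+1 + j.1, by omega⟩) :=
                Set.inter_eq_left.2 hsub
              have hadm_v : ∀ (k : ℕ) (h : k + 1 < (m - (n'+1)) + (n'+1)),
                  A ((fun k : Fin ((m - (n'+1)) + (n'+1)) => u ⟨k.1, by omega⟩) ⟨k, by omega⟩)
                    ((fun k : Fin ((m - (n'+1)) + (n'+1)) => u ⟨k.1, by omega⟩) ⟨k+1, h⟩) = 1 := by
                intro k h
                exact hadm_u k (by omega)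
              have hKEY := key_lemma hf heig (n'+1) (m - (n'+1))
                (fun k : Fin ((m - (n'+1)) + (n'+1)) => u ⟨k.1, by omega⟩) hadm_v (by omega)
              have hvu : (cylW (fun k : Fin ((m - (n'+1)) + (n'+1)) => u ⟨k.1, by omega⟩)
                  : Set (Shift N A)) = cylW u := by
                ext x
                constructor
                · intro hx k; exact hx ⟨k.1, by omega⟩
                · intro hx j; exact hx ⟨j.1, by omega⟩
              have h2 : cylW u ∩ cylW w = (cylW u : Set (Shift N A)) := by
                apply Set.inter_eq_left.2
                intro x hx k
                exact (hx ⟨k.1, by omega⟩).trans (hpre k).symm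
              rw [h1, h1', h2]
              have hfinal : (ν (cylW (fun j : Fin (m - (n'+1)) => u ⟨n'+1 + j.1, by omega⟩))).toReal
                  = ∫ x in cylW u, lam ^ (n'+1) * Real.exp (-(birkhoff f (n'+1) x)) ∂ν := by
                rw [show (cylW (fun j : Fin (m - (n'+1)) => u ⟨n'+1 + j.1, by omega⟩)
                    : Set (Shift N A))
                  = cylW (fun j : Fin (m - (n'+1)) =>
                      (fun k : Fin ((m - (n'+1)) + (n'+1)) => u ⟨k.1, by omega⟩)
                        ⟨n'+1 + j.1, by omega⟩) from rfl]
                rw [← hKEY, integral_indicator (measurable_cylW _), hvu, integral_const_mul]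
              rw [← hfinal, ENNReal.ofReal_toReal (measure_ne_top ν _)]
            · push_neg at hadm_u
              obtain ⟨k, h, hk⟩ := hadm_u
              have hu_empty : (cylW u : Set (Shift N A)) = ∅ := by
                ext x
                simp only [Set.mem_empty_iff_false, iff_false]
                intro hx
                apply hk
                rw [← hx ⟨k, by omega⟩, ← hx ⟨k+1, h⟩]
                exact x.2 k
              rcases Nat.lt_or_ge (k+1) (n'+1) with hlt | hge
              · exfalso
                apply hk
                have h3 := hadm k hlt
                convert h3 using 3 <;>
                  first
                    | exact (hpre ⟨k, by omega⟩).symm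
                    | exact (hpre ⟨k+1, by omega⟩).symm
              · rcases Nat.lt_or_ge k (n'+1) with hk2 | hk2
                · have hkn : k = n' := by omega
                  have h1' : cylW (fun j : Fin (m - (n'+1)) => u ⟨n'+1 + j.1, by omega⟩)
                        ∩ {x : Shift N A | A (w (Fin.last n')) (x.1 0) = 1}
                      = (∅ : Set (Shift N A)) := by
                    ext x
                    simp only [Set.mem_inter_iff, Set.mem_empty_iff_false, iff_false, not_and]
                    intro hxu' hxR
                    apply hk
                    have h0 : x.1 0 = u ⟨n'+1, by omega⟩ :=
                      (hxu' (⟨0, by omega⟩ : Fin (m - (n'+1)))).trans (congrArg u (Fin.ext (by simp)))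
                    have h6 : A (w (Fin.last n')) (u ⟨n'+1, by omega⟩) = 1 := by
                      rw [← h0]; exact hxR
                    have h5 : A (u ⟨n', by omega⟩) (u ⟨n'+1, by omega⟩) = 1 := by
                      convert h6 using 3
                      exact (hpre (Fin.last n')).symm
                    convert h5 using 3 <;> exact Fin.ext (by simp; omega)
                  rw [h1, h1', hu_empty]
                  simp
                · have h1' : cylW (fun j : Fin (m - (n'+1)) => u ⟨n'+1 + j.1, by omega⟩)
                      = (∅ : Set (Shift N A)) := by
                    ext x
                    simp only [Set.mem_empty_iff_false, iff_false]
                    intro hxu'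
                    apply hk
                    have e1 : x.1 (k - (n'+1)) = u ⟨k, by omega⟩ :=
                      (hxu' (⟨k - (n'+1), by omega⟩ : Fin (m - (n'+1)))).trans (congrArg u (Fin.ext (by simp; omega)))
                    have e2 : x.1 (k - (n'+1) + 1) = u ⟨k+1, h⟩ :=
                      (hxu' (⟨k - (n'+1) + 1, by omega⟩ : Fin (m - (n'+1)))).trans (congrArg u (Fin.ext (by simp; omega)))
                    rw [← e1, ← e2]
                    exact x.2 (k - (n'+1))
                  rw [h1, h1', hu_empty]
                  simp
          · push_neg at hpre
            obtain ⟨k, hk⟩ := hpre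
            have h1 : pmapS w hadm ⁻¹' cylW u ∩ {x : Shift N A | A (w (Fin.last n')) (x.1 0) = 1}
                = (∅ : Set (Shift N A)) := by
              ext x
              simp only [Set.mem_inter_iff, Set.mem_preimage, Set.mem_empty_iff_false,
                iff_false, not_and]
              intro hxu hxR
              apply hk
              have h2 : (pmapS w hadm x).1 k.1 = u (⟨k.1, by omega⟩ : Fin m) :=
                hxu (⟨k.1, by omega⟩ : Fin m)
              rw [pmap_val w hadm x hxR, wcat_lt w x k.1 (by omega)] at h2
              exact h2
            have h2 : cylW u ∩ cylW w = (∅ : Set (Shift N A)) := by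
              ext x
              simp only [Set.mem_inter_iff, Set.mem_empty_iff_false, iff_false, not_and]
              intro hxu hxw
              exact hk ((hxw k).symm.trans (hxu (⟨k.1, by omega⟩ : Fin m)))
            rw [h1, h2]
            simp
      haveI hfin : IsFiniteMeasure
          ((ν.restrict {x : Shift N A | A (w (Fin.last n')) (x.1 0) = 1}).map (pmapS w hadm)) :=
        Measure.isFiniteMeasure_map _ _
      have hμeq : ((ν.restrict {x : Shift N A | A (w (Fin.last n')) (x.1 0) = 1}).map
            (pmapS w hadm))
          = (ν.restrict (cylW w)).withDensity
            (fun x => ENNReal.ofReal (lam ^ (n'+1) * Real.exp (-(birkhoff f (n'+1) x)))) :=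
        MeasureTheory.ext_of_generate_finite (cylSets N A) measSpace_eq isPiSystem_cylSets
          hAgree hAgreeUniv
      rw [image_eq w hadm E hEw, show ν (pmapS w hadm ⁻¹' E ∩
          {x : Shift N A | A (w (Fin.last n')) (x.1 0) = 1})
        = ((ν.restrict {x : Shift N A | A (w (Fin.last n')) (x.1 0) = 1}).map (pmapS w hadm)) E
        from (hμ1app E hE).symm]
      rw [hμeq, hμ2app E hE, Set.inter_eq_left.2 hEw]
      rw [ENNReal.toReal_ofReal (setIntegral_nonneg hE (fun x _ => hgnn x))]

end AuxShift

/-- Let `f` be Hölder continuous and `ν` the eigenmeasure of the dual transfer operator: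
`∫ L_f φ dν = λ_f ∫ φ dν` for all Hölder `φ`, where `λ_f = e^{P(σ,f)}`.  Then `ν` is
non-singular, and the `n`-th Jacobian of `ν` is `λ_f^{-n} e^{S_n f}`; equivalently, for every
word `w` of length `n` and every Borel set `E ⊆ [w]`,
`ν (σⁿ E) = ∫_E λ_f^n e^{−S_n f} dν`. -/
theorem eigenmeasure_nonsingular_jacobian
    (N : ℕ) (hN : 2 ≤ N) (A : Matrix (Fin N) (Fin N) ℝ)
    (h01 : ZeroOne A) (hap : Aperiodic A)
    (f : Shift N A → ℝ) (hf : HolderCont f)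
    (lam : ℝ) (hlam : lam = Real.exp (pressure f))
    (ν : Measure (Shift N A)) (hprob : IsProbabilityMeasure ν)
    (heig : ∀ φ : Shift N A → ℝ, HolderCont φ →
      ∫ ω, transferOp f φ ω ∂ν = lam * ∫ ω, φ ω ∂ν) :
    (∀ B : Set (Shift N A), MeasurableSet B → ν B = 0 → ν (shiftMap ⁻¹' B) = 0) ∧
    (∀ (n : ℕ) (w : Fin n → Fin N) (E : Set (Shift N A)), MeasurableSet E →
      E ⊆ cylW w →
      (ν (shiftMap^[n] '' E)).toReal = ∫ ω in E, lam ^ n * Real.exp (-(birkhoff f n ω)) ∂ν) := by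
  have hlam' : 0 < lam := by rw [hlam]; exact Real.exp_pos _
  constructor
  · intro B hB hB0
    have hcover : shiftMap ⁻¹' B = ⋃ a : Fin N,
        (shiftMap ⁻¹' B ∩ cylW (fun _ : Fin 1 => a)) := by
      ext x
      simp only [Set.mem_iUnion, Set.mem_inter_iff, Set.mem_preimage]
      constructor
      · intro hx
        refine ⟨x.1 0, hx, ?_⟩
        intro k
        have hk0 : k.1 = 0 := by omega
        rw [hk0]
      · rintro ⟨a, hx, _⟩; exact hx
    rw [hcover]
    apply measure_iUnion_null
    intro a
    have hEa : MeasurableSet (shiftMap ⁻¹' B ∩ cylW (fun _ : Fin 1 => a)) :=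
      (measurable_shiftMap hB).inter (measurable_cylW _)
    have hsubw : shiftMap ⁻¹' B ∩ cylW (fun _ : Fin 1 => a) ⊆ cylW (fun _ : Fin 1 => a) :=
      Set.inter_subset_right
    have hmain := main_jacobian hf hlam' heig 1 (fun _ : Fin 1 => a) _ hEa hsubw
    have himg0 : ν (shiftMap^[1] '' (shiftMap ⁻¹' B ∩ cylW (fun _ : Fin 1 => a))) = 0 := by
      apply measure_mono_null _ hB0
      rintro y ⟨x, hx, rfl⟩
      simpa using hx.1
    rw [himg0] at hmain
    simp only [ENNReal.toReal_zero] at hmain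
    obtain ⟨M, hM0, hM⟩ := bounded_of_continuous (holder_continuous hf)
    have hlow : ∀ x ∈ (shiftMap ⁻¹' B ∩ cylW (fun _ : Fin 1 => a)),
        lam * Real.exp (-M) ≤ lam ^ 1 * Real.exp (-(birkhoff f 1 x)) := by
      intro x _
      rw [pow_one]
      apply mul_le_mul_of_nonneg_left _ hlam'.le
      apply Real.exp_le_exp.2
      have hb : birkhoff f 1 x = f x := by simp [birkhoff]
      rw [hb]
      have habs := abs_le.mp (hM x)
      linarith [habs.2]
    have hgint : IntegrableOn (fun x : Shift N A => lam ^ 1 * Real.exp (-(birkhoff f 1 x)))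
        (shiftMap ⁻¹' B ∩ cylW (fun _ : Fin 1 => a)) ν :=
      integrable_cont (continuous_const.mul
        (Real.continuous_exp.comp ((continuous_birkhoff (holder_continuous hf) 1).neg))) _
    have hge := setIntegral_ge_of_const_le hEa (measure_ne_top ν _) hlow hgint
    rw [← hmain] at hge
    have hpos : 0 < lam * Real.exp (-M) := mul_pos hlam' (Real.exp_pos _)
    have h0 : (ν (shiftMap ⁻¹' B ∩ cylW (fun _ : Fin 1 => a))).toReal = 0 := by
      rw [measureReal_def, smul_eq_mul] at hge
      nlinarith [(ENNReal.toReal_nonneg : 0 ≤ (ν (shiftMap ⁻¹' B ∩ cylW (fun _ : Fin 1 => a))).toReal)]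
    rcases (ENNReal.toReal_eq_zero_iff _).mp h0 with h | h
    · exact h
    · exact absurd h (measure_ne_top ν _)
  · intro n w E hE hEw
    exact main_jacobian hf hlam' heig n w E hE hEw
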